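/- arXiv:2003.12782 — 4 statements merged into one kernel-verified Lean document; each statement's English description precedes it below -/
import Mathlib

section
/- If 1 < β ≤ 2, then v_β is strictly increasing on [0, π/2] and strictly decreasing on [π/2, π]; if 1/2 ≤ β < 1, then v_β is strictly decreasing on [0, π/2] and strictly increasing on [π/2, π]. -/
open Real MeasureTheory Filter Topology Set
open scoped ENNReal RealInnerProductSpace

noncomputable section

/-- The forcing term `f_β(θ) = (β cos²θ + sin²θ)^(-5/2)`. -/
def fker (β θ : ℝ) : ℝ := (β * Real.cos θ ^ 2 + Real.sin θ ^ 2) ^ (-(5:ℝ)/2)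

/-- `v` is a π-periodic, twice continuously differentiable solution of `v'' + 9 v = f_β`. -/
def IsVBeta (β : ℝ) (v : ℝ → ℝ) : Prop :=
  ContDiff ℝ 2 v ∧ Function.Periodic v π ∧
    ∀ θ : ℝ, deriv (deriv v) θ + 9 * v θ = fker β θ


namespace Stmt2Aux

def Uq (β θ : ℝ) : ℝ := β * Real.cos θ ^ 2 + Real.sin θ ^ 2
def Pq (β θ : ℝ) : ℝ := Real.sqrt (Uq β θ)
def Vq (β θ : ℝ) : ℝ :=
  (-8 * Pq β θ ^ 3 + 6 * (β + 1) * Pq β θ - 3 * β / Pq β θ) / (9 * β ^ 2)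
def V1 (β θ : ℝ) : ℝ :=
  (1 - β) / (9 * β ^ 2) * (Real.sin θ * Real.cos θ) *
    (-24 * Pq β θ + 6 * (β + 1) / Pq β θ + 3 * β / Pq β θ ^ 3)
def V2 (β θ : ℝ) : ℝ :=
  (1 - β) / (9 * β ^ 2) *
    ((Real.cos θ ^ 2 - Real.sin θ ^ 2) *
        (-24 * Pq β θ + 6 * (β + 1) / Pq β θ + 3 * β / Pq β θ ^ 3) +
      (1 - β) * Real.sin θ ^ 2 * Real.cos θ ^ 2 *
        (-24 / Pq β θ - 6 * (β + 1) / Pq β θ ^ 3 - 9 * β / Pq β θ ^ 5))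

lemma U_pos {β : ℝ} (hβ : 0 < β) (θ : ℝ) : 0 < Uq β θ := by
  have h := Real.sin_sq_add_cos_sq θ
  unfold Uq
  rcases le_total 1 β with h1 | h1
  · nlinarith [mul_nonneg (by linarith : (0:ℝ) ≤ β - 1) (sq_nonneg (Real.cos θ))]
  · nlinarith [mul_nonneg (by linarith : (0:ℝ) ≤ 1 - β) (sq_nonneg (Real.sin θ))]

lemma P_pos {β : ℝ} (hβ : 0 < β) (θ : ℝ) : 0 < Pq β θ :=
  Real.sqrt_pos.mpr (U_pos hβ θ)

lemma P_sq {β : ℝ} (hβ : 0 < β) (θ : ℝ) : Pq β θ ^ 2 = Uq β θ :=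
  Real.sq_sqrt (U_pos hβ θ).le

lemma hasDerivAt_U (β θ : ℝ) :
    HasDerivAt (Uq β) (2 * (1 - β) * Real.sin θ * Real.cos θ) θ := by
  have h1 : HasDerivAt (fun θ => β * Real.cos θ ^ 2 + Real.sin θ ^ 2)
      (β * ((2:ℕ) * Real.cos θ ^ (2-1) * (-Real.sin θ)) + (2:ℕ) * Real.sin θ ^ (2-1) * Real.cos θ) θ :=
    (((Real.hasDerivAt_cos θ).pow 2).const_mul β).add ((Real.hasDerivAt_sin θ).pow 2)
  refine h1.congr_deriv ?_
  ring

lemma hasDerivAt_P {β : ℝ} (hβ : 0 < β) (θ : ℝ) :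
    HasDerivAt (Pq β) ((1 - β) * Real.sin θ * Real.cos θ / Pq β θ) θ := by
  have := (hasDerivAt_U β θ).sqrt (ne_of_gt (U_pos hβ θ))
  refine this.congr_deriv ?_
  rw [Pq]
  ring

lemma hasDerivAt_V {β : ℝ} (hβ : 0 < β) (θ : ℝ) :
    HasDerivAt (Vq β) (V1 β θ) θ := by
  have hp := hasDerivAt_P hβ θ
  have hP := P_pos hβ θ
  have hPne : Pq β θ ≠ 0 := ne_of_gt hP
  set D : ℝ := (1 - β) * Real.sin θ * Real.cos θ / Pq β θ with hD
  have h1 : HasDerivAt (fun t => Pq β t ^ 3 * (-8) + 6 * (β + 1) * Pq β t - 3 * β / Pq β t)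
      ((((3:ℕ) * Pq β θ ^ (3-1) * D) * (-8) + (6 * (β+1)) * D) -
        (0 * Pq β θ - 3 * β * D) / Pq β θ ^ 2) θ :=
    (((hp.pow 3).mul_const (-8)).add (hp.const_mul (6*(β+1)))).sub
      ((hasDerivAt_const θ (3*β)).div hp hPne)
  have hfe : (fun t => -8 * Pq β t ^ 3 + 6 * (β + 1) * Pq β t - 3 * β / Pq β t)
      = (fun t => Pq β t ^ 3 * (-8) + 6 * (β + 1) * Pq β t - 3 * β / Pq β t) := by
    funext t; ring
  have h2 := (hfe ▸ h1).div_const (9 * β ^ 2)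
  have he : Vq β = fun t => (-8 * Pq β t ^ 3 + 6 * (β + 1) * Pq β t - 3 * β / Pq β t) / (9 * β ^ 2) := rfl
  rw [he]
  refine h2.congr_deriv ?_
  rw [V1, hD]
  field_simp
  ring


lemma hasDerivAt_V1 {β : ℝ} (hβ : 0 < β) (θ : ℝ) :
    HasDerivAt (V1 β) (V2 β θ) θ := by
  have hp := hasDerivAt_P hβ θ
  have hP := P_pos hβ θ
  have hPne : Pq β θ ≠ 0 := ne_of_gt hP
  set D : ℝ := (1 - β) * Real.sin θ * Real.cos θ / Pq β θ with hD
  have hsc : HasDerivAt (fun t => Real.sin t * Real.cos t)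
      (Real.cos θ * Real.cos θ + Real.sin θ * (-Real.sin θ)) θ :=
    (Real.hasDerivAt_sin θ).mul (Real.hasDerivAt_cos θ)
  have hR : HasDerivAt (fun t => -24 * Pq β t + 6 * (β + 1) / Pq β t + 3 * β / Pq β t ^ 3)
      (((-24) * D + (0 * Pq β θ - 6 * (β + 1) * D) / Pq β θ ^ 2) +
        (0 * Pq β θ ^ 3 - 3 * β * ((3:ℕ) * Pq β θ ^ (3-1) * D)) / (Pq β θ ^ 3) ^ 2) θ :=
    ((hp.const_mul (-24)).add ((hasDerivAt_const θ (6*(β+1))).div hp hPne)).add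
      ((hasDerivAt_const θ (3*β)).div (hp.pow 3) (pow_ne_zero 3 hPne))
  have h := (hsc.mul hR).const_mul ((1-β)/(9*β^2))
  have hfe : V1 β = fun t => (1-β)/(9*β^2) *
      ((Real.sin t * Real.cos t) *
        (-24 * Pq β t + 6 * (β + 1) / Pq β t + 3 * β / Pq β t ^ 3)) := by
    funext t; rw [V1]; ring
  rw [hfe]
  refine h.congr_deriv ?_
  rw [V2, hD]
  field_simp
  ring

lemma fker_eq {β : ℝ} (hβ : 0 < β) (θ : ℝ) : fker β θ = 1 / Pq β θ ^ 5 := by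
  have hU := U_pos hβ θ
  have h1 : fker β θ = (Uq β θ) ^ (-(5:ℝ)/2) := rfl
  rw [h1, show (-(5:ℝ)/2) = (1/2) * (-(5:ℕ) : ℝ) by norm_num, Real.rpow_mul hU.le,
    ← Real.sqrt_eq_rpow, Real.rpow_neg (Real.sqrt_nonneg _), Real.rpow_natCast]
  rw [one_div]
  rfl

lemma ode_V {β : ℝ} (hβ : 0 < β) (hβ1 : β ≠ 1) (θ : ℝ) :
    V2 β θ + 9 * Vq β θ = fker β θ := by
  have hP := P_pos hβ θ
  have hPne : Pq β θ ≠ 0 := ne_of_gt hP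
  have hp2 : Pq β θ ^ 2 = β * Real.cos θ ^ 2 + Real.sin θ ^ 2 := P_sq hβ θ
  have hs := Real.sin_sq_add_cos_sq θ
  have hβ1' : β - 1 ≠ 0 := sub_ne_zero.mpr hβ1
  have hc2 : Real.cos θ ^ 2 = (Pq β θ ^ 2 - 1) / (β - 1) := by
    field_simp
    linear_combination -hp2 - hs
  have hs2 : Real.sin θ ^ 2 = 1 - Real.cos θ ^ 2 := by linarith
  rw [fker_eq hβ θ]
  simp only [V2, Vq]
  rw [hs2, hc2]
  field_simp
  ring


lemma Vq_periodic (β : ℝ) : Function.Periodic (Vq β) π := by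
  intro θ
  have hU : Uq β (θ + π) = Uq β θ := by
    simp [Uq, Real.cos_add, Real.sin_add]
  simp only [Vq, Pq, hU]

lemma bracket_neg {β θ : ℝ} (hβl : 1/2 ≤ β) (hβr : β ≤ 2) (hβ1 : β ≠ 1)
    (hs : 0 < Real.sin θ) (hc : Real.cos θ ≠ 0) :
    -24 * Pq β θ + 6 * (β + 1) / Pq β θ + 3 * β / Pq β θ ^ 3 < 0 := by
  have hβ0 : (0:ℝ) < β := by linarith
  have hP := P_pos hβ0 θ
  have hp2 : Pq β θ ^ 2 = β * Real.cos θ ^ 2 + Real.sin θ ^ 2 := P_sq hβ0 θ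
  have htr := Real.sin_sq_add_cos_sq θ
  have hs2 : 0 < Real.sin θ ^ 2 := pow_pos hs 2
  have hc2 : 0 < Real.cos θ ^ 2 := pow_two_pos_of_ne_zero hc
  have h4 : -24 * Pq β θ ^ 4 + 6 * (β + 1) * Pq β θ ^ 2 + 3 * β < 0 := by
    have hu4 : Pq β θ ^ 4 = (Pq β θ ^ 2) ^ 2 := by ring
    rcases lt_or_gt_of_ne hβ1 with h1 | h1
    · -- β < 1 : u > β, u + β > 1
      have hub : β < Pq β θ ^ 2 := by nlinarith [mul_pos (show (0:ℝ) < 1 - β by linarith) hs2]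
      nlinarith [mul_pos (sub_pos.mpr hub) (show (0:ℝ) < 8 * (Pq β θ ^ 2 + β) - 2 * (β + 1) by nlinarith)]
    · -- 1 < β : u > 1
      have hub : 1 < Pq β θ ^ 2 := by nlinarith [mul_pos (show (0:ℝ) < β - 1 by linarith) hc2]
      nlinarith [mul_pos (sub_pos.mpr hub) (show (0:ℝ) < 8 * (Pq β θ ^ 2 + 1) - 2 * (β + 1) by nlinarith)]
  have he : -24 * Pq β θ + 6 * (β + 1) / Pq β θ + 3 * β / Pq β θ ^ 3
      = (-24 * Pq β θ ^ 4 + 6 * (β + 1) * Pq β θ ^ 2 + 3 * β) / Pq β θ ^ 3 := by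
    field_simp
  rw [he]
  exact div_neg_of_neg_of_pos h4 (pow_pos hP 3)

lemma deriv_Vq {β : ℝ} (hβ : 0 < β) (θ : ℝ) : deriv (Vq β) θ = V1 β θ :=
  (hasDerivAt_V hβ θ).deriv

lemma continuous_Vq {β : ℝ} (hβ : 0 < β) : Continuous (Vq β) := by
  have : Differentiable ℝ (Vq β) := fun θ => (hasDerivAt_V hβ θ).differentiableAt
  exact this.continuous

lemma mono_high {β : ℝ} (hβ : 1 < β) (hβ2 : β ≤ 2) :
    StrictMonoOn (Vq β) (Set.Icc 0 (π/2)) := by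
  have hβ0 : (0:ℝ) < β := by linarith
  apply strictMonoOn_of_deriv_pos (convex_Icc _ _) (continuous_Vq hβ0).continuousOn
  intro x hx
  rw [interior_Icc] at hx
  rw [deriv_Vq hβ0]
  have hs : 0 < Real.sin x := Real.sin_pos_of_pos_of_lt_pi hx.1 (by linarith [Real.pi_pos, hx.2])
  have hc : 0 < Real.cos x := Real.cos_pos_of_mem_Ioo ⟨by linarith [Real.pi_pos, hx.1], hx.2⟩
  have hB := bracket_neg (by linarith) hβ2 (by linarith) hs (ne_of_gt hc)
  have h1 : (1 - β) / (9 * β ^ 2) * (Real.sin x * Real.cos x) < 0 :=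
    mul_neg_of_neg_of_pos (div_neg_of_neg_of_pos (by linarith) (by positivity)) (mul_pos hs hc)
  simpa only [V1] using mul_pos_of_neg_of_neg h1 hB

lemma anti_high {β : ℝ} (hβ : 1 < β) (hβ2 : β ≤ 2) :
    StrictAntiOn (Vq β) (Set.Icc (π/2) π) := by
  have hβ0 : (0:ℝ) < β := by linarith
  apply strictAntiOn_of_deriv_neg (convex_Icc _ _) (continuous_Vq hβ0).continuousOn
  intro x hx
  rw [interior_Icc] at hx
  rw [deriv_Vq hβ0]
  have hs : 0 < Real.sin x := Real.sin_pos_of_pos_of_lt_pi (by linarith [Real.pi_pos, hx.1]) hx.2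
  have hc : Real.cos x < 0 := Real.cos_neg_of_pi_div_two_lt_of_lt hx.1 (by linarith [Real.pi_pos, hx.2])
  have hB := bracket_neg (by linarith) hβ2 (by linarith) hs (ne_of_lt hc)
  have h1 : 0 < (1 - β) / (9 * β ^ 2) * (Real.sin x * Real.cos x) :=
    mul_pos_of_neg_of_neg (div_neg_of_neg_of_pos (by linarith) (by positivity)) (mul_neg_of_pos_of_neg hs hc)
  simpa only [V1] using mul_neg_of_pos_of_neg h1 hB

lemma anti_low {β : ℝ} (hβl : 1/2 ≤ β) (hβ : β < 1) :
    StrictAntiOn (Vq β) (Set.Icc 0 (π/2)) := by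
  have hβ0 : (0:ℝ) < β := by linarith
  apply strictAntiOn_of_deriv_neg (convex_Icc _ _) (continuous_Vq hβ0).continuousOn
  intro x hx
  rw [interior_Icc] at hx
  rw [deriv_Vq hβ0]
  have hs : 0 < Real.sin x := Real.sin_pos_of_pos_of_lt_pi hx.1 (by linarith [Real.pi_pos, hx.2])
  have hc : 0 < Real.cos x := Real.cos_pos_of_mem_Ioo ⟨by linarith [Real.pi_pos, hx.1], hx.2⟩
  have hB := bracket_neg hβl (by linarith) (by linarith) hs (ne_of_gt hc)
  have h1 : 0 < (1 - β) / (9 * β ^ 2) * (Real.sin x * Real.cos x) :=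
    mul_pos (div_pos (by linarith) (by positivity)) (mul_pos hs hc)
  simpa only [V1] using mul_neg_of_pos_of_neg h1 hB

lemma mono_low {β : ℝ} (hβl : 1/2 ≤ β) (hβ : β < 1) :
    StrictMonoOn (Vq β) (Set.Icc (π/2) π) := by
  have hβ0 : (0:ℝ) < β := by linarith
  apply strictMonoOn_of_deriv_pos (convex_Icc _ _) (continuous_Vq hβ0).continuousOn
  intro x hx
  rw [interior_Icc] at hx
  rw [deriv_Vq hβ0]
  have hs : 0 < Real.sin x := Real.sin_pos_of_pos_of_lt_pi (by linarith [Real.pi_pos, hx.1]) hx.2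
  have hc : Real.cos x < 0 := Real.cos_neg_of_pi_div_two_lt_of_lt hx.1 (by linarith [Real.pi_pos, hx.2])
  have hB := bracket_neg hβl (by linarith) (by linarith) hs (ne_of_lt hc)
  have h1 : (1 - β) / (9 * β ^ 2) * (Real.sin x * Real.cos x) < 0 :=
    mul_neg_of_pos_of_neg (div_pos (by linarith) (by positivity)) (mul_neg_of_pos_of_neg hs hc)
  simpa only [V1] using mul_pos_of_neg_of_neg h1 hB


lemma trig3 (x : ℝ) : HasDerivAt (fun t => Real.cos (3*t)) (-3 * Real.sin (3*x)) x := by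
  have h := (Real.hasDerivAt_cos (3*x)).comp x ((hasDerivAt_id x).const_mul 3)
  exact h.congr_deriv (by ring)

lemma trig3' (x : ℝ) : HasDerivAt (fun t => Real.sin (3*t)) (3 * Real.cos (3*x)) x := by
  have h := (Real.hasDerivAt_sin (3*x)).comp x ((hasDerivAt_id x).const_mul 3)
  exact h.congr_deriv (by ring)

/-- Uniqueness: any `IsVBeta`-solution coincides with the explicit solution `Vq`. -/
lemma v_eq_Vq {β : ℝ} (hβ : 0 < β) (hβ1 : β ≠ 1) {v : ℝ → ℝ}
    (hC : ContDiff ℝ 2 v) (hper : Function.Periodic v π)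
    (hode : ∀ θ : ℝ, deriv (deriv v) θ + 9 * v θ = fker β θ) :
    ∀ θ, v θ = Vq β θ := by
  have h2 : ContDiff ℝ ((1:WithTop ℕ∞) + 1) v := by exact_mod_cast hC
  obtain ⟨hd, -, hc⟩ := contDiff_succ_iff_deriv.mp h2
  have hd2 : Differentiable ℝ (deriv v) := hc.differentiable one_ne_zero
  set w : ℝ → ℝ := fun θ => v θ - Vq β θ with hw
  set w1 : ℝ → ℝ := fun θ => deriv v θ - V1 β θ with hw1def
  have hw1 : ∀ θ, HasDerivAt w (w1 θ) θ := fun θ =>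
    ((hd θ).hasDerivAt).sub (hasDerivAt_V hβ θ)
  have hw2 : ∀ θ, HasDerivAt w1 (-9 * w θ) θ := by
    intro θ
    have h := ((hd2 θ).hasDerivAt).sub (hasDerivAt_V1 hβ θ)
    have he : deriv (deriv v) θ - V2 β θ = -9 * w θ := by
      have h1 := hode θ
      have h2 := ode_V hβ hβ1 θ
      simp only [hw]
      linarith
    exact he ▸ h
  set a : ℝ := w 0 with ha
  set b : ℝ := w1 0 with hb
  set g : ℝ → ℝ := fun θ => a * Real.cos (3*θ) + b/3 * Real.sin (3*θ) with hg
  set g1 : ℝ → ℝ := fun θ => -3*a * Real.sin (3*θ) + b * Real.cos (3*θ) with hg1def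
  have hg1 : ∀ θ, HasDerivAt g (g1 θ) θ := by
    intro θ
    have h := ((trig3 θ).const_mul a).add ((trig3' θ).const_mul (b/3))
    exact h.congr_deriv (by ring)
  have hg2 : ∀ θ, HasDerivAt g1 (-9 * g θ) θ := by
    intro θ
    have h := ((trig3' θ).const_mul (-3*a)).add ((trig3 θ).const_mul b)
    exact h.congr_deriv (by simp only [hg]; ring)
  set z : ℝ → ℝ := fun θ => w θ - g θ with hz
  set z1 : ℝ → ℝ := fun θ => w1 θ - g1 θ with hz1def
  have hz1 : ∀ θ, HasDerivAt z (z1 θ) θ := fun θ => (hw1 θ).sub (hg1 θ)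
  have hz2 : ∀ θ, HasDerivAt z1 (-9 * z θ) θ := by
    intro θ
    exact ((hw2 θ).sub (hg2 θ)).congr_deriv (by simp only [hz]; ring)
  set E : ℝ → ℝ := fun θ => z1 θ ^ 2 + 9 * z θ ^ 2 with hE
  have hEd : ∀ θ, HasDerivAt E 0 θ := by
    intro θ
    have h := (((hz2 θ).pow 2)).add (((hz1 θ).pow 2).const_mul 9)
    exact h.congr_deriv (by push_cast; ring)
  have hEconst : ∀ θ, E θ = E 0 :=
    fun θ => is_const_of_deriv_eq_zero (fun x => (hEd x).differentiableAt)
      (fun x => (hEd x).deriv) θ 0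
  have hE0 : E 0 = 0 := by
    simp only [hE, hz, hz1def, hg, hg1def]
    norm_num [Real.cos_zero, Real.sin_zero]
    rw [hb, ha]; ring
  have hzzero : ∀ θ, z θ = 0 := by
    intro θ
    have h := hEconst θ
    rw [hE0] at h
    simp only [hE] at h
    nlinarith [sq_nonneg (z1 θ), sq_nonneg (z θ)]
  have hwg : ∀ θ, w θ = g θ := by
    intro θ
    have := hzzero θ
    simp only [hz] at this
    linarith
  have hwper : ∀ θ, w (θ + π) = w θ := by
    intro θ
    simp only [hw, hper θ, Vq_periodic β θ]
  -- a = 0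
  have ha0 : a = 0 := by
    have h1 := hwg π
    have h2 := hwper 0
    rw [zero_add] at h2
    have hcos : Real.cos (3*π) = -1 := by
      rw [show (3:ℝ)*π = π + 2*π by ring, Real.cos_add_two_pi, Real.cos_pi]
    have hsin : Real.sin (3*π) = 0 := by
      rw [show (3:ℝ)*π = π + 2*π by ring, Real.sin_add_two_pi, Real.sin_pi]
    rw [hwg 0] at h2
    simp only [hg, hcos, hsin] at h1 h2
    norm_num [Real.cos_zero, Real.sin_zero] at h1 h2 ⊢
    linarith
  -- b = 0
  have hb0 : b = 0 := by
    have h2 := hwper (π/2)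
    rw [hwg (π/2), hwg (π/2 + π)] at h2
    have hs1 : Real.sin (3*(π/2 + π)) = 1 := by
      rw [show (3:ℝ)*(π/2 + π) = π/2 + 2*π + 2*π by ring, Real.sin_add_two_pi,
        Real.sin_add_two_pi, Real.sin_pi_div_two]
    have hs2 : Real.sin (3*(π/2)) = -1 := by
      rw [show (3:ℝ)*(π/2) = π + π/2 by ring, Real.sin_add, Real.sin_pi, Real.cos_pi,
        Real.sin_pi_div_two]
      ring
    simp only [hg, ha0, hs1, hs2] at h2
    norm_num at h2
    linear_combination (3/2) * h2
  intro θ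
  have h := hwg θ
  simp only [hw, hg, ha0, hb0] at h
  norm_num at h
  linarith

end Stmt2Aux

/-- monotonicity of `v_β` on `[0, π/2]` and `[π/2, π]`. -/
theorem stmt2 (β : ℝ) (v : ℝ → ℝ) (hv : IsVBeta β v) :
    ((1 < β ∧ β ≤ 2) →
      StrictMonoOn v (Set.Icc 0 (π/2)) ∧ StrictAntiOn v (Set.Icc (π/2) π)) ∧
    ((1/2 ≤ β ∧ β < 1) →
      StrictAntiOn v (Set.Icc 0 (π/2)) ∧ StrictMonoOn v (Set.Icc (π/2) π)) := by
  constructor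
  · rintro ⟨h1, h2⟩
    have hβ0 : (0:ℝ) < β := by linarith
    have heq := Stmt2Aux.v_eq_Vq hβ0 (ne_of_gt h1) hv.1 hv.2.1 hv.2.2
    refine ⟨fun x hx y hy hxy => ?_, fun x hx y hy hxy => ?_⟩
    · rw [heq x, heq y]; exact Stmt2Aux.mono_high h1 h2 hx hy hxy
    · rw [heq x, heq y]; exact Stmt2Aux.anti_high h1 h2 hx hy hxy
  · rintro ⟨h1, h2⟩
    have hβ0 : (0:ℝ) < β := by linarith
    have heq := Stmt2Aux.v_eq_Vq hβ0 (ne_of_lt h2) hv.1 hv.2.1 hv.2.2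
    refine ⟨fun x hx y hy hxy => ?_, fun x hx y hy hxy => ?_⟩
    · rw [heq x, heq y]; exact Stmt2Aux.anti_low h1 h2 hx hy hxy
    · rw [heq x, heq y]; exact Stmt2Aux.mono_low h1 h2 hx hy hxy
end
end

section
/- For every β ∈ [1/2, 2], the function v_β satisfies v_β(0) = (3 − 2β)/(9 β^{3/2}) and v_β(π/2) = (3β − 2)/(9 β²). -/
open Real MeasureTheory Filter Topology Set
open scoped ENNReal RealInnerProductSpace

noncomputable section

lemma stmt4_base_pos {β : ℝ} (hβ : 1/2 ≤ β) (t : ℝ) :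
    0 < β * Real.cos t ^ 2 + Real.sin t ^ 2 := by
  nlinarith [Real.sin_sq_add_cos_sq t, sq_nonneg (Real.cos t), sq_nonneg (Real.sin t)]

lemma stmt4_fker_cont {β : ℝ} (hβ : 1/2 ≤ β) : Continuous (fker β) := by
  unfold fker
  apply Continuous.rpow_const
  · continuity
  · intro t; exact Or.inl (stmt4_base_pos hβ t).ne'

lemma stmt4_hasDerivAt_h {β : ℝ} (t : ℝ) :
    HasDerivAt (fun t => β * Real.cos t ^ 2 + Real.sin t ^ 2)
      (2*(1-β)*Real.sin t*Real.cos t) t := by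
  have h1 := ((Real.hasDerivAt_cos t).pow 2).const_mul β
  have h2 := (Real.hasDerivAt_sin t).pow 2
  have := h1.add h2
  exact this.congr_deriv (by ring)

/-- Representation of a π-periodic solution via the resonance-free Green identity. -/
lemma stmt4_rep {β : ℝ} {v : ℝ → ℝ} (hβ : 1/2 ≤ β) (hv : IsVBeta β v) (θ : ℝ) :
    6 * v θ = ∫ t in θ..(θ+π), fker β t * Real.sin (3*(t-θ)) := by
  obtain ⟨hC, hper, hode⟩ := hv
  have hdv : Differentiable ℝ v := hC.differentiable (by norm_num)
  have h2 : ContDiff ℝ ((1:ℕ)+1) v := by exact_mod_cast hC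
  have hdv2 : Differentiable ℝ (deriv v) :=
    ((contDiff_succ_iff_deriv.mp h2).2.2).differentiable (by norm_num)
  set g : ℝ → ℝ := fun s => deriv v s * Real.sin (3*(s-θ)) - 3 * v s * Real.cos (3*(s-θ)) with hg
  have key : ∀ s, HasDerivAt g (fker β s * Real.sin (3*(s-θ))) s := by
    intro s
    have h1 : HasDerivAt v (deriv v s) s := (hdv s).hasDerivAt
    have h2' : HasDerivAt (deriv v) (deriv (deriv v) s) s := (hdv2 s).hasDerivAt
    have hin : HasDerivAt (fun s : ℝ => 3*(s-θ)) 3 s := by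
      simpa using ((hasDerivAt_id s).sub_const θ).const_mul 3
    have hsin : HasDerivAt (fun s => Real.sin (3*(s-θ))) (Real.cos (3*(s-θ)) * 3) s :=
      by have := (Real.hasDerivAt_sin (3*(s-θ))).comp s hin; exact this
    have hcos : HasDerivAt (fun s => Real.cos (3*(s-θ))) (-Real.sin (3*(s-θ)) * 3) s :=
      by have := (Real.hasDerivAt_cos (3*(s-θ))).comp s hin; exact this
    have hd := (h2'.mul hsin).sub ((h1.const_mul 3).mul hcos)
    refine hd.congr_deriv ?_
    symm
    linear_combination (-(Real.sin (3*(s-θ)))) * hode s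
  have hcont : Continuous (fun t => fker β t * Real.sin (3*(t-θ))) := by
    apply (stmt4_fker_cont hβ).mul
    continuity
  have hint := intervalIntegral.integral_eq_sub_of_hasDerivAt
      (fun t _ => key t) (hcont.intervalIntegrable θ (θ+π))
  rw [hint]
  have e0 : (3:ℝ)*((θ+π)-θ) = π + 2*π := by ring
  have e1 : Real.sin (3*((θ+π)-θ)) = 0 := by
    rw [e0, Real.sin_add_two_pi, Real.sin_pi]
  have e2 : Real.cos (3*((θ+π)-θ)) = -1 := by
    rw [e0, Real.cos_add_two_pi, Real.cos_pi]
  have e3 : (3:ℝ)*(θ-θ) = 0 := by ring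
  have e4 : v (θ + π) = v θ := hper θ
  simp only [hg, e1, e2, e3, Real.sin_zero, Real.cos_zero, e4]
  ring

lemma stmt4_ftc1 {β : ℝ} (hβ : 1/2 ≤ β) :
    ∫ t in (0:ℝ)..π, (3:ℝ) * (fker β t * Real.sin (3*t)) = 2*(3-2*β) * β ^ (-(3:ℝ)/2) := by
  set H : ℝ → ℝ := fun t => (3*Real.cos t - (6-2*β)*Real.cos t^3) *
      (β * Real.cos t ^ 2 + Real.sin t ^ 2) ^ (-(3:ℝ)/2) with hH
  have key : ∀ t : ℝ, HasDerivAt H ((3:ℝ) * (fker β t * Real.sin (3*t))) t := by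
    intro t
    have hpos := stmt4_base_pos hβ t
    have hh := stmt4_hasDerivAt_h (β := β) t
    have hu : HasDerivAt (fun t => 3*Real.cos t - (6-2*β)*Real.cos t^3)
        (3*(-Real.sin t) - (6-2*β)*(3*Real.cos t^2*(-Real.sin t))) t := by
      have := ((Real.hasDerivAt_cos t).const_mul 3).sub
        (((Real.hasDerivAt_cos t).pow 3).const_mul (6-2*β))
      exact this.congr_deriv (by ring)
    have hw : HasDerivAt (fun t => (β * Real.cos t ^ 2 + Real.sin t ^ 2) ^ (-(3:ℝ)/2))
        (2*(1-β)*Real.sin t*Real.cos t * (-(3:ℝ)/2) *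
          (β * Real.cos t ^ 2 + Real.sin t ^ 2) ^ ((-(3:ℝ)/2) - 1)) t :=
      hh.rpow_const (Or.inl hpos.ne')
    have hd := hu.mul hw
    refine hd.congr_deriv ?_
    symm
    have hsplit : (β * Real.cos t ^ 2 + Real.sin t ^ 2) ^ (-(3:ℝ)/2)
        = (β * Real.cos t ^ 2 + Real.sin t ^ 2) *
          (β * Real.cos t ^ 2 + Real.sin t ^ 2) ^ (-(5:ℝ)/2) := by
      rw [show (-(3:ℝ)/2) = 1 + (-(5:ℝ)/2) by norm_num, Real.rpow_add hpos, Real.rpow_one]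
    have hexp : ((-(3:ℝ)/2) - 1 : ℝ) = (-(5:ℝ)/2) := by norm_num
    rw [hexp, hsplit]
    unfold fker
    rw [Real.sin_three_mul]
    linear_combination (-(β * Real.cos t ^ 2 + Real.sin t ^ 2) ^ (-(5:ℝ)/2) *
      (3*Real.sin t*(3+(6-2*β)*Real.cos t^2))) * (Real.sin_sq_add_cos_sq t)
  have hcont : Continuous (fun t => (3:ℝ) * (fker β t * Real.sin (3*t))) := by
    apply continuous_const.mul
    apply (stmt4_fker_cont hβ).mul
    continuity
  rw [intervalIntegral.integral_eq_sub_of_hasDerivAt (fun t _ => key t)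
      (hcont.intervalIntegrable 0 π)]
  norm_num [hH, Real.cos_pi, Real.sin_pi, Real.cos_zero, Real.sin_zero]
  ring

lemma stmt4_ftc2 {β : ℝ} (hβ : 1/2 ≤ β) :
    ∫ t in (π/2)..(π/2+π), (3*β^2) * (fker β t * Real.cos (3*t)) = 2*(3*β-2) := by
  set K : ℝ → ℝ := fun t => (3*β*Real.sin t + (2-6*β)*Real.sin t^3) *
      (β * Real.cos t ^ 2 + Real.sin t ^ 2) ^ (-(3:ℝ)/2) with hK
  have key : ∀ t : ℝ, HasDerivAt K ((3*β^2) * (fker β t * Real.cos (3*t))) t := by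
    intro t
    have hpos := stmt4_base_pos hβ t
    have hh := stmt4_hasDerivAt_h (β := β) t
    have hu : HasDerivAt (fun t => 3*β*Real.sin t + (2-6*β)*Real.sin t^3)
        (3*β*Real.cos t + (2-6*β)*(3*Real.sin t^2*Real.cos t)) t := by
      have := ((Real.hasDerivAt_sin t).const_mul (3*β)).add
        (((Real.hasDerivAt_sin t).pow 3).const_mul (2-6*β))
      exact this.congr_deriv (by ring)
    have hw : HasDerivAt (fun t => (β * Real.cos t ^ 2 + Real.sin t ^ 2) ^ (-(3:ℝ)/2))
        (2*(1-β)*Real.sin t*Real.cos t * (-(3:ℝ)/2) *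
          (β * Real.cos t ^ 2 + Real.sin t ^ 2) ^ ((-(3:ℝ)/2) - 1)) t :=
      hh.rpow_const (Or.inl hpos.ne')
    have hd := hu.mul hw
    refine hd.congr_deriv ?_
    symm
    have hsplit : (β * Real.cos t ^ 2 + Real.sin t ^ 2) ^ (-(3:ℝ)/2)
        = (β * Real.cos t ^ 2 + Real.sin t ^ 2) *
          (β * Real.cos t ^ 2 + Real.sin t ^ 2) ^ (-(5:ℝ)/2) := by
      rw [show (-(3:ℝ)/2) = 1 + (-(5:ℝ)/2) by norm_num, Real.rpow_add hpos, Real.rpow_one]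
    have hexp : ((-(3:ℝ)/2) - 1 : ℝ) = (-(5:ℝ)/2) := by norm_num
    rw [hexp, hsplit]
    unfold fker
    rw [Real.cos_three_mul]
    linear_combination (-(β * Real.cos t ^ 2 + Real.sin t ^ 2) ^ (-(5:ℝ)/2) *
      (Real.cos t*(3*β*(2-6*β)*Real.sin t^2 - 9*β^2))) * (Real.sin_sq_add_cos_sq t)
  have hcont : Continuous (fun t => (3*β^2) * (fker β t * Real.cos (3*t))) := by
    apply continuous_const.mul
    apply (stmt4_fker_cont hβ).mul
    continuity
  rw [intervalIntegral.integral_eq_sub_of_hasDerivAt (fun t _ => key t)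
      (hcont.intervalIntegrable _ _)]
  norm_num [hK, Real.sin_add, Real.cos_add]
  ring

lemma stmt4_shift (t : ℝ) : Real.sin (3*(t-π/2)) = Real.cos (3*t) := by
  have h : 3*(t-π/2) = 3*t - (π + π/2) := by ring
  rw [h, Real.sin_sub, Real.sin_add, Real.cos_add]
  simp

/-- the values of `v_β` at `0` and `π/2`. -/
theorem stmt4 (β : ℝ) (hβ : β ∈ Set.Icc (1/2 : ℝ) 2) (v : ℝ → ℝ) (hv : IsVBeta β v) :
    v 0 = (3 - 2*β) / (9 * β^((3:ℝ)/2)) ∧ v (π/2) = (3*β - 2) / (9 * β^2) := by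
  have hβ1 : 1/2 ≤ β := hβ.1
  have hβpos : (0:ℝ) < β := lt_of_lt_of_le (by norm_num) hβ1
  constructor
  · have h6 := stmt4_rep hβ1 hv 0
    have hEq : (∫ t in (0:ℝ)..(0+π), fker β t * Real.sin (3*(t-0)))
        = ∫ t in (0:ℝ)..π, fker β t * Real.sin (3*t) := by norm_num
    rw [hEq] at h6
    have hc := stmt4_ftc1 (β := β) hβ1
    rw [intervalIntegral.integral_const_mul] at hc
    have hrp : β ^ (-(3:ℝ)/2) = (β ^ ((3:ℝ)/2))⁻¹ := by
      rw [show (-(3:ℝ)/2) = -((3:ℝ)/2) by ring, Real.rpow_neg hβpos.le]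
    rw [hrp, ← h6] at hc
    have hne : β ^ ((3:ℝ)/2) ≠ 0 := (Real.rpow_pos_of_pos hβpos _).ne'
    field_simp at hc ⊢
    linarith
  · have h6 := stmt4_rep hβ1 hv (π/2)
    have hEq : (∫ t in (π/2)..(π/2+π), fker β t * Real.sin (3*(t-π/2)))
        = ∫ t in (π/2)..(π/2+π), fker β t * Real.cos (3*t) := by
      simp only [stmt4_shift]
    rw [hEq] at h6
    have hc := stmt4_ftc2 (β := β) hβ1
    rw [intervalIntegral.integral_const_mul] at hc
    rw [← h6] at hc
    have hne : β ≠ 0 := hβpos.ne'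
    field_simp at hc ⊢
    linarith
end
end

section
/- For every β ∈ [1/2, 2] and every θ with 0 ≤ θ < π, the function v_β is given by the explicit formula v_β(θ) = (sin 3θ)/3 · ∫₀^θ cos(3x) f_β(x) dx + (cos 3θ)/3 · ∫_θ^{π/2} sin(3x) f_β(x) dx. -/
open Real MeasureTheory Filter Topology Set
open scoped ENNReal RealInnerProductSpace

noncomputable section

lemma fker_cont {β : ℝ} (hβ : (1:ℝ)/2 ≤ β) : Continuous (fker β) := by
  apply Continuous.rpow_const
  · continuity
  · intro x
    refine Or.inl (ne_of_gt ?_)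
    nlinarith [Real.sin_sq_add_cos_sq x, sq_nonneg (Real.cos x), sq_nonneg (Real.sin x)]

lemma fker_symm (β x : ℝ) : fker β (π - x) = fker β x := by
  unfold fker
  rw [Real.cos_pi_sub, Real.sin_pi_sub]
  ring_nf

lemma cos_three_pi : Real.cos (3*π) = -1 := by
  rw [show (3:ℝ)*π = π + 2*π by ring, Real.cos_add_two_pi, Real.cos_pi]

lemma sin_three_pi : Real.sin (3*π) = 0 := by
  rw [show (3:ℝ)*π = π + 2*π by ring, Real.sin_add_two_pi, Real.sin_pi]

lemma hasDerivAt_sin3 (t : ℝ) : HasDerivAt (fun u : ℝ => Real.sin (3*u)) (3 * Real.cos (3*t)) t := by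
  have h : HasDerivAt (fun u : ℝ => 3*u) 3 t := by simpa using (hasDerivAt_id t).const_mul 3
  simpa [mul_comm] using h.sin

lemma hasDerivAt_cos3 (t : ℝ) : HasDerivAt (fun u : ℝ => Real.cos (3*u)) (-(3 * Real.sin (3*t))) t := by
  have h : HasDerivAt (fun u : ℝ => 3*u) 3 t := by simpa using (hasDerivAt_id t).const_mul 3
  simpa [mul_comm] using h.cos


/-- explicit formula for `v_β` on `[0, π)`. -/
theorem stmt5 (β : ℝ) (hβ : β ∈ Set.Icc (1/2 : ℝ) 2) (v : ℝ → ℝ) (hv : IsVBeta β v)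
    (θ : ℝ) (hθ : θ ∈ Set.Ico 0 π) :
    v θ = Real.sin (3*θ) / 3 * (∫ x in (0:ℝ)..θ, Real.cos (3*x) * fker β x)
        + Real.cos (3*θ) / 3 * (∫ x in θ..(π/2), Real.sin (3*x) * fker β x) := by
  obtain ⟨hC2, hper, hode⟩ := hv
  have hfc : Continuous (fker β) := fker_cont hβ.1
  have hcF : Continuous (fun x => Real.cos (3*x) * fker β x) :=
    (Real.continuous_cos.comp (continuous_const.mul continuous_id)).mul hfc
  have hcG : Continuous (fun x => Real.sin (3*x) * fker β x) :=
    (Real.continuous_sin.comp (continuous_const.mul continuous_id)).mul hfc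
  set F : ℝ → ℝ := fun t => ∫ x in (0:ℝ)..t, Real.cos (3*x) * fker β x with hFdef
  set G : ℝ → ℝ := fun t => ∫ x in t..(π/2), Real.sin (3*x) * fker β x with hGdef
  set w : ℝ → ℝ := fun t => Real.sin (3*t)/3 * F t + Real.cos (3*t)/3 * G t with hwdef
  set w1 : ℝ → ℝ := fun t => Real.cos (3*t) * F t - Real.sin (3*t) * G t with hw1def
  -- derivatives of F and G
  have hF : ∀ t, HasDerivAt F (Real.cos (3*t) * fker β t) t := fun t =>
    intervalIntegral.integral_hasDerivAt_right (hcF.intervalIntegrable _ _)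
      (hcF.stronglyMeasurableAtFilter _ _) hcF.continuousAt
  have hG : ∀ t, HasDerivAt G (-(Real.sin (3*t) * fker β t)) t := by
    intro t
    have hrepr : G = fun u => -(∫ x in (π/2)..u, Real.sin (3*x) * fker β x) := by
      funext u
      simp only [hGdef]
      rw [intervalIntegral.integral_symm]
    rw [hrepr]
    exact (intervalIntegral.integral_hasDerivAt_right (hcG.intervalIntegrable _ _)
      (hcG.stronglyMeasurableAtFilter _ _) hcG.continuousAt).neg
  -- derivative of w
  have hw : ∀ t, HasDerivAt w (w1 t) t := by
    intro t
    have h1 : HasDerivAt (fun u => Real.sin (3*u)/3 * F u)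
        ((3 * Real.cos (3*t))/3 * F t + Real.sin (3*t)/3 * (Real.cos (3*t) * fker β t)) t :=
      ((hasDerivAt_sin3 t).div_const 3).mul (hF t)
    have h2 : HasDerivAt (fun u => Real.cos (3*u)/3 * G u)
        ((-(3 * Real.sin (3*t)))/3 * G t + Real.cos (3*t)/3 * (-(Real.sin (3*t) * fker β t))) t :=
      ((hasDerivAt_cos3 t).div_const 3).mul (hG t)
    have := h1.fun_add h2
    refine this.congr_deriv (Eq.symm ?_)
    simp only [hw1def]
    ring
  -- derivative of w1
  have hw1 : ∀ t, HasDerivAt w1 (fker β t - 9 * w t) t := by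
    intro t
    have h1 : HasDerivAt (fun u => Real.cos (3*u) * F u)
        ((-(3 * Real.sin (3*t))) * F t + Real.cos (3*t) * (Real.cos (3*t) * fker β t)) t :=
      (hasDerivAt_cos3 t).mul (hF t)
    have h2 : HasDerivAt (fun u => Real.sin (3*u) * G u)
        ((3 * Real.cos (3*t)) * G t + Real.sin (3*t) * (-(Real.sin (3*t) * fker β t))) t :=
      (hasDerivAt_sin3 t).mul (hG t)
    have := h1.fun_sub h2
    refine this.congr_deriv (Eq.symm ?_)
    have hpy := Real.sin_sq_add_cos_sq (3*t)
    simp only [hwdef]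
    linear_combination (-(fker β t)) * hpy
  -- derivatives of v
  set D : ℝ → ℝ := deriv v with hDdef
  have hvdiff : Differentiable ℝ v := hC2.differentiable (by norm_num)
  have hD : ∀ t, HasDerivAt v (D t) t := fun t => (hvdiff t).hasDerivAt
  have hC1 : ContDiff ℝ 1 D := by
    have h2 : ContDiff ℝ (1+1 : ℕ) v := by exact_mod_cast hC2
    exact (contDiff_succ_iff_deriv.mp h2).2.2
  have hDdiff : Differentiable ℝ D := hC1.differentiable (by norm_num)
  have hD' : ∀ t, HasDerivAt D (fker β t - 9 * v t) t := by
    intro t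
    have h := (hDdiff t).hasDerivAt
    have : deriv D t = fker β t - 9 * v t := by
      have := hode t
      simp only [hDdef] at *
      linarith
    rwa [this] at h
  -- periodicity facts
  have hvper : v π = v 0 := by simpa using hper 0
  have hDper : D π = D 0 := by
    have hfun : (fun t => v (t + π)) = v := funext fun t => hper t
    have h0 : D (0 + π) = deriv (fun t => v (t + π)) 0 := (deriv_comp_add_const v π 0).symm
    simp only [hfun] at h0
    simpa using h0
  -- integration by parts identities
  have key1 : (∫ x in (0:ℝ)..π, Real.cos (3*x) * fker β x) = -(2 * D 0) := by
    have hP : ∀ x ∈ Set.uIcc (0:ℝ) π, HasDerivAt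
        (fun u => D u * Real.cos (3*u) + 3 * v u * Real.sin (3*u))
        (Real.cos (3*x) * fker β x) x := by
      intro x _
      have h1 := (hD' x).fun_mul (hasDerivAt_cos3 x)
      have h2 := (((hD x).const_mul 3)).fun_mul (hasDerivAt_sin3 x)
      have := h1.fun_add h2
      refine this.congr_deriv (Eq.symm ?_)
      ring
    have := intervalIntegral.integral_eq_sub_of_hasDerivAt hP (hcF.intervalIntegrable _ _)
    rw [this, cos_three_pi, sin_three_pi, hDper]
    simp
    ring
  have key2 : (∫ x in (0:ℝ)..π, Real.sin (3*x) * fker β x) = 6 * v 0 := by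
    have hQ : ∀ x ∈ Set.uIcc (0:ℝ) π, HasDerivAt
        (fun u => D u * Real.sin (3*u) - 3 * v u * Real.cos (3*u))
        (Real.sin (3*x) * fker β x) x := by
      intro x _
      have h1 := (hD' x).fun_mul (hasDerivAt_sin3 x)
      have h2 := (((hD x).const_mul 3)).fun_mul (hasDerivAt_cos3 x)
      have := h1.fun_sub h2
      refine this.congr_deriv (Eq.symm ?_)
      ring
    have := intervalIntegral.integral_eq_sub_of_hasDerivAt hQ (hcG.intervalIntegrable _ _)
    rw [this, cos_three_pi, sin_three_pi, hvper]
    simp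
    ring
  -- symmetry identities
  have sym1 : (∫ x in (0:ℝ)..π, Real.cos (3*x) * fker β x) = 0 := by
    have h := intervalIntegral.integral_comp_sub_left
      (f := fun x => Real.cos (3*x) * fker β x) (a := 0) (b := π) (d := π)
    have heq : ∀ x : ℝ, Real.cos (3*(π - x)) * fker β (π - x) = -(Real.cos (3*x) * fker β x) := by
      intro x
      rw [fker_symm]
      have : Real.cos (3*(π - x)) = -Real.cos (3*x) := by
        rw [show 3*(π - x) = 3*π - 3*x by ring, Real.cos_sub, cos_three_pi, sin_three_pi]
        ring
      rw [this]; ring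
    simp only [heq] at h
    rw [intervalIntegral.integral_neg] at h
    simp only [sub_self, sub_zero] at h
    linarith
  have sym2 : (∫ x in (0:ℝ)..π, Real.sin (3*x) * fker β x)
      = 2 * ∫ x in (0:ℝ)..(π/2), Real.sin (3*x) * fker β x := by
    have hsplit : (∫ x in (0:ℝ)..(π/2), Real.sin (3*x) * fker β x)
        + (∫ x in (π/2)..π, Real.sin (3*x) * fker β x)
        = ∫ x in (0:ℝ)..π, Real.sin (3*x) * fker β x :=
      intervalIntegral.integral_add_adjacent_intervals
        (hcG.intervalIntegrable _ _) (hcG.intervalIntegrable _ _)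
    have h := intervalIntegral.integral_comp_sub_left
      (f := fun x => Real.sin (3*x) * fker β x) (a := 0) (b := π/2) (d := π)
    have heq : ∀ x : ℝ, Real.sin (3*(π - x)) * fker β (π - x) = Real.sin (3*x) * fker β x := by
      intro x
      rw [fker_symm]
      have : Real.sin (3*(π - x)) = Real.sin (3*x) := by
        rw [show 3*(π - x) = 3*π - 3*x by ring, Real.sin_sub, cos_three_pi, sin_three_pi]
        ring
      rw [this]
    simp only [heq] at h
    rw [show π - π/2 = π/2 by ring, sub_zero] at h
    linarith
  -- values at 0
  have hD0 : D 0 = 0 := by rw [sym1] at key1; linarith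
  have hv0 : v 0 = (1/3) * ∫ x in (0:ℝ)..(π/2), Real.sin (3*x) * fker β x := by
    rw [sym2] at key2; linarith
  have hF0 : F 0 = 0 := intervalIntegral.integral_same
  have hw0 : w 0 = v 0 := by
    simp only [hwdef, hF0]
    rw [hv0]
    simp [hGdef]
  have hw10 : w1 0 = D 0 := by
    simp only [hw1def, hF0, hD0]
    simp
  -- energy argument
  set p : ℝ → ℝ := fun t => v t - w t with hpdef
  set p1 : ℝ → ℝ := fun t => D t - w1 t with hp1def
  have hp : ∀ t, HasDerivAt p (p1 t) t := fun t => (hD t).sub (hw t)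
  have hp1 : ∀ t, HasDerivAt p1 (-(9 * p t)) t := by
    intro t
    have := (hD' t).fun_sub (hw1 t)
    refine this.congr_deriv (Eq.symm ?_)
    simp only [hpdef]
    ring
  set E : ℝ → ℝ := fun t => p1 t ^ 2 + 9 * p t ^ 2 with hEdef
  have hE : ∀ t, HasDerivAt E 0 t := by
    intro t
    have h1 := ((hp1 t).fun_pow 2).fun_add (((hp t).fun_pow 2).const_mul 9)
    refine h1.congr_deriv (Eq.symm ?_)
    ring
  have hEconst : ∀ t, E t = E 0 := fun t =>
    is_const_of_deriv_eq_zero (fun x => (hE x).differentiableAt)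
      (fun x => (hE x).deriv) t 0
  have hE0 : E 0 = 0 := by
    simp only [hEdef, hpdef, hp1def, hw0, hw10]
    ring
  have hpzero : p θ = 0 := by
    have h := hEconst θ
    rw [hE0] at h
    simp only [hEdef] at h
    nlinarith [sq_nonneg (p1 θ), sq_nonneg (p θ)]
  have : v θ = w θ := by
    simp only [hpdef] at hpzero
    linarith
  rw [this]
end
end

section
/- Let 2/3 < β < 3/2 and let g : ℝ² → ℝ be a bounded C² function with bounded second derivatives which is not constant. If g attains its global minimum at a point w_m ∈ ℝ², then L̄ g(w_m) < 0; if g attains its global maximum at a point w_M ∈ ℝ², then L̄ g(w_M) > 0. -/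
open Real MeasureTheory Filter Topology Set
open scoped ENNReal RealInnerProductSpace

noncomputable section

abbrev R2 : Type := EuclideanSpace ℝ (Fin 2)

/-- The anisotropic kernel `K̄(x) = 9 v(θ(x)) / |x|³`, with `θ(x)` a polar angle of `x`
(chosen as `Complex.arg`; the choice is immaterial since `v` is π-periodic). -/
def Kbar (v : ℝ → ℝ) (x : R2) : ℝ :=
  9 * v (Complex.arg ((x 0 : ℂ) + (x 1 : ℂ) * Complex.I)) / ‖x‖^3

/-- The nonlocal operator `L̄ g(x) = -(1/(4π)) ∫ (g(x+y)+g(x−y)−2g(x)) K̄(y) dy`. -/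
def Lop (v : ℝ → ℝ) (g : R2 → ℝ) (x : R2) : ℝ :=
  -(1/(4*π)) * ∫ y : R2, (g (x + y) + g (x - y) - 2 * g x) * Kbar v y

/-- `D_R = (ℝ²×ℝ²) \ (B_Rᶜ × B_Rᶜ)`. -/
def DR (R : ℝ) : Set (R2 × R2) := ((Metric.ball (0:R2) R)ᶜ ×ˢ (Metric.ball (0:R2) R)ᶜ)ᶜ

/-- The nonlocal energy `ℰ(u; B_R) = ∬_{D_R} |u(x)−u(y)|² K̄(x−y) dx dy`. -/
def nEnergy (v : ℝ → ℝ) (u : R2 → ℝ) (R : ℝ) : ℝ≥0∞ :=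
  ∫⁻ p in DR R, ENNReal.ofReal (|u p.1 - u p.2|^2 * Kbar v (p.1 - p.2))

namespace Stmt11


def Pa (β θ : ℝ) : ℝ :=
  (3*Real.cos θ - (6-2*β)*Real.cos θ^3) * (β+(1-β)*Real.sin θ^2) ^ (-(3:ℝ)/2)
def Ra (β θ : ℝ) : ℝ :=
  (3*β*Real.sin θ + (2-6*β)*Real.sin θ^3) * (β+(1-β)*Real.sin θ^2) ^ (-(3:ℝ)/2)

lemma Qpos {β : ℝ} (hβ : 0 < β) (θ : ℝ) : 0 < β + (1-β)*Real.sin θ^2 := by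
  have h1 : Real.sin θ^2 ≤ 1 := Real.sin_sq_le_one θ
  have h0 : 0 ≤ Real.sin θ^2 := sq_nonneg _
  rcases le_or_gt β 1 with h | h
  · nlinarith
  · nlinarith

lemma fker_eq {β : ℝ} (θ : ℝ) : fker β θ = (β+(1-β)*Real.sin θ^2) ^ (-(5:ℝ)/2) := by
  simp only [fker]
  congr 1
  linear_combination β * (Real.sin_sq_add_cos_sq θ)

lemma hasDerivAt_Pa {β : ℝ} (hβ : 0 < β) (θ : ℝ) :
    HasDerivAt (Pa β) (3 * (fker β θ * Real.sin (3*θ))) θ := by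
  have hQpos : 0 < β + (1-β)*Real.sin θ^2 := Qpos hβ θ
  have hQ : HasDerivAt (fun x => β + (1-β)*Real.sin x^2)
      ((1-β)*((2:ℝ)*Real.sin θ^(2-1)*Real.cos θ)) θ :=
    (((Real.hasDerivAt_sin θ).pow 2).const_mul (1-β)).const_add β
  have hW : HasDerivAt (fun x => (β + (1-β)*Real.sin x^2) ^ (-(3:ℝ)/2))
      (((1-β)*((2:ℝ)*Real.sin θ^(2-1)*Real.cos θ)) * (-(3:ℝ)/2)
        * (β + (1-β)*Real.sin θ^2) ^ ((-(3:ℝ)/2)-1)) θ :=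
    hQ.rpow_const (Or.inl hQpos.ne')
  have hu : HasDerivAt (fun x => (3*Real.cos x - (6-2*β)*Real.cos x^3))
      ((3*(-Real.sin θ) - (6-2*β)*((3:ℝ)*Real.cos θ^(3-1)*(-Real.sin θ)))) θ :=
    ((Real.hasDerivAt_cos θ).const_mul 3).sub
      (((Real.hasDerivAt_cos θ).pow 3).const_mul (6-2*β))
  have h := hu.mul hW
  refine h.congr_deriv (Eq.symm ?_)
  rw [fker_eq θ, show ((-(3:ℝ)/2)-1) = (-(5:ℝ)/2) by norm_num,
    show ((β + (1-β)*Real.sin θ^2) ^ (-(3:ℝ)/2)) = (β + (1-β)*Real.sin θ^2) *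
      (β + (1-β)*Real.sin θ^2) ^ (-(5:ℝ)/2) by
        rw [show (-(3:ℝ)/2) = 1 + (-(5:ℝ)/2) by norm_num, Real.rpow_add hQpos, Real.rpow_one],
    Real.sin_three_mul]
  set w := (β + (1-β)*Real.sin θ^2) ^ (-(5:ℝ)/2) with hw
  linear_combination ((-6*β^2*Real.cos θ^2 + 24*β*Real.cos θ^2 - 18*Real.cos θ^2 - 3*β - 9)
    * Real.sin θ * w) * (Real.sin_sq_add_cos_sq θ)

lemma hasDerivAt_Ra {β : ℝ} (hβ : 0 < β) (θ : ℝ) :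
    HasDerivAt (Ra β) ((3*β^2) * (fker β θ * Real.cos (3*θ))) θ := by
  have hQpos : 0 < β + (1-β)*Real.sin θ^2 := Qpos hβ θ
  have hQ : HasDerivAt (fun x => β + (1-β)*Real.sin x^2)
      ((1-β)*((2:ℝ)*Real.sin θ^(2-1)*Real.cos θ)) θ :=
    (((Real.hasDerivAt_sin θ).pow 2).const_mul (1-β)).const_add β
  have hW : HasDerivAt (fun x => (β + (1-β)*Real.sin x^2) ^ (-(3:ℝ)/2))
      (((1-β)*((2:ℝ)*Real.sin θ^(2-1)*Real.cos θ)) * (-(3:ℝ)/2)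
        * (β + (1-β)*Real.sin θ^2) ^ ((-(3:ℝ)/2)-1)) θ :=
    hQ.rpow_const (Or.inl hQpos.ne')
  have hu : HasDerivAt (fun x => (3*β*Real.sin x + (2-6*β)*Real.sin x^3))
      ((3*β*Real.cos θ + (2-6*β)*((3:ℝ)*Real.sin θ^(3-1)*Real.cos θ))) θ :=
    ((Real.hasDerivAt_sin θ).const_mul (3*β)).add
      (((Real.hasDerivAt_sin θ).pow 3).const_mul (2-6*β))
  have h := hu.mul hW
  refine h.congr_deriv (Eq.symm ?_)
  rw [fker_eq θ, show ((-(3:ℝ)/2)-1) = (-(5:ℝ)/2) by norm_num,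
    show ((β + (1-β)*Real.sin θ^2) ^ (-(3:ℝ)/2)) = (β + (1-β)*Real.sin θ^2) *
      (β + (1-β)*Real.sin θ^2) ^ (-(5:ℝ)/2) by
        rw [show (-(3:ℝ)/2) = 1 + (-(5:ℝ)/2) by norm_num, Real.rpow_add hQpos, Real.rpow_one],
    Real.cos_three_mul]
  set w := (β + (1-β)*Real.sin θ^2) ^ (-(5:ℝ)/2) with hw
  linear_combination (12*β^2*Real.cos θ * w) * (Real.sin_sq_add_cos_sq θ)

lemma Pa_anti (β a : ℝ) : Pa β (a+π) = -Pa β a := by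
  simp only [Pa, Real.cos_add_pi, Real.sin_add_pi]
  rw [show β+(1-β)*(-Real.sin a)^2 = β+(1-β)*Real.sin a^2 by ring]
  ring

lemma Ra_anti (β a : ℝ) : Ra β (a+π) = -Ra β a := by
  simp only [Ra, Real.cos_add_pi, Real.sin_add_pi]
  rw [show β+(1-β)*(-Real.sin a)^2 = β+(1-β)*Real.sin a^2 by ring]
  ring

lemma v_rep {β : ℝ} (hβ : 0 < β) {v : ℝ → ℝ} (hv : IsVBeta β v) (a : ℝ) :
    v a = (Real.sin (3*a) * Ra β a)/(9*β^2) - (Real.cos (3*a) * Pa β a)/9 := by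
  obtain ⟨hC2, hper, hode⟩ := hv
  have hβ' : β ≠ 0 := hβ.ne'
  have hdv : Differentiable ℝ v := hC2.differentiable (by norm_num)
  have hdv2 : Differentiable ℝ (deriv v) := by
    have h := (contDiff_succ_iff_deriv.mp (show ContDiff ℝ ((1:ℕ)+1) v by exact_mod_cast hC2)).2
    exact h.2.differentiable (by norm_num)
  have hlin : ∀ θ : ℝ, HasDerivAt (fun x : ℝ => 3*x - 3*a) 3 θ := by
    intro θ
    simpa using ((hasDerivAt_id θ).const_mul (3:ℝ)).sub_const (3*a)
  have hsin : ∀ θ : ℝ, HasDerivAt (fun x => Real.sin (3*x-3*a)) (3*Real.cos (3*θ-3*a)) θ := by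
    intro θ
    refine ((Real.hasDerivAt_sin (3*θ-3*a)).comp θ (hlin θ)).congr_deriv ?_
    ring
  have hcos : ∀ θ : ℝ, HasDerivAt (fun x => Real.cos (3*x-3*a)) (-(3*Real.sin (3*θ-3*a))) θ := by
    intro θ
    have := (Real.hasDerivAt_cos (3*θ-3*a)).comp θ (hlin θ)
    refine this.congr_deriv (Eq.symm ?_)
    ring
  have hΦ : ∀ θ, HasDerivAt
      (fun x => deriv v x * Real.sin (3*x - 3*a) - 3 * v x * Real.cos (3*x - 3*a))
      (fker β θ * Real.sin (3*θ-3*a)) θ := by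
    intro θ
    have h1 := ((hdv2 θ).hasDerivAt).mul (hsin θ)
    have h2 := (((hdv θ).hasDerivAt).const_mul (3:ℝ)).mul (hcos θ)
    refine (h1.sub h2).congr_deriv (Eq.symm ?_)
    rw [← hode θ]
    ring
  have hΨ : ∀ θ, HasDerivAt
      (fun x => (Real.cos (3*a)/9) * Pa β x - (Real.sin (3*a)/(9*β^2)) * Ra β x)
      (fker β θ * Real.sin (3*θ-3*a)/3) θ := by
    intro θ
    have h := ((hasDerivAt_Pa hβ θ).const_mul (Real.cos (3*a)/9)).sub
      ((hasDerivAt_Ra hβ θ).const_mul (Real.sin (3*a)/(9*β^2)))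
    refine h.congr_deriv (Eq.symm ?_)
    rw [Real.sin_sub]
    field_simp
    ring
  set D : ℝ → ℝ := fun x => (deriv v x * Real.sin (3*x - 3*a) - 3 * v x * Real.cos (3*x - 3*a))/3
      - ((Real.cos (3*a)/9) * Pa β x - (Real.sin (3*a)/(9*β^2)) * Ra β x) with hDdef
  have hD : ∀ θ, HasDerivAt D 0 θ := by
    intro θ
    have := ((hΦ θ).div_const 3).sub (hΨ θ)
    exact this.congr_deriv (by ring)
  have key : D (a+π) = D a :=
    is_const_of_deriv_eq_zero (fun θ => (hD θ).differentiableAt) (fun θ => (hD θ).deriv) _ _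
  have hsin3pi : Real.sin (3*(a+π) - 3*a) = 0 := by
    rw [show 3*(a+π) - 3*a = π + 2*π by ring, Real.sin_add_two_pi, Real.sin_pi]
  have hcos3pi : Real.cos (3*(a+π) - 3*a) = -1 := by
    rw [show 3*(a+π) - 3*a = π + 2*π by ring, Real.cos_add_two_pi, Real.cos_pi]
  have hsin0 : Real.sin (3*a - 3*a) = 0 := by rw [sub_self, Real.sin_zero]
  have hcos0 : Real.cos (3*a - 3*a) = 1 := by rw [sub_self, Real.cos_zero]
  rw [hDdef] at key
  simp only [hsin3pi, hcos3pi, hsin0, hcos0, Pa_anti, Ra_anti, hper a] at key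
  linear_combination key/2

lemma qpos {b S : ℝ} (h1 : 2/3 < b) (h2 : b < 3/2) (hS0 : 0 ≤ S) (hS1 : S ≤ 1) :
    0 < S*(3-4*S)*(3*b+(2-6*b)*S) - b^2*((1-S)*(1-4*S)*(3-(6-2*b)*(1-S))) := by
  have hx : (0:ℝ) < 3*b-2 := by linarith
  have hy : (0:ℝ) < 3-2*b := by linarith
  have hT : (0:ℝ) ≤ 1-S := by linarith
  have g1 : (0:ℝ) ≤ S^2*(1-S) := mul_nonneg (sq_nonneg S) hT
  have g2 : (0:ℝ) ≤ (3-2*b)*S*(1-S) := mul_nonneg (mul_nonneg hy.le hS0) hT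
  have g3 : (0:ℝ) ≤ (3-2*b)*S*(1-S)^2 := mul_nonneg (mul_nonneg hy.le hS0) (sq_nonneg _)
  have g4 : (0:ℝ) ≤ (3-2*b)^2*S*(1-S) := mul_nonneg (mul_nonneg (sq_nonneg _) hS0) hT
  have g5 : (0:ℝ) ≤ (3-2*b)^2*S*(1-S)^2 := mul_nonneg (mul_nonneg (sq_nonneg _) hS0) (sq_nonneg _)
  have g6 : (0:ℝ) ≤ (3-2*b)^3*(1-S)^3 := mul_nonneg (pow_nonneg hy.le 3) (pow_nonneg hT 3)
  have g7 : (0:ℝ) ≤ (3*b-2)*S^3 := mul_nonneg hx.le (pow_nonneg hS0 3)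
  have g8 : (0:ℝ) ≤ (3*b-2)*(3-2*b)*(1-S)^3 :=
    mul_nonneg (mul_nonneg hx.le hy.le) (pow_nonneg hT 3)
  have g9 : (0:ℝ) ≤ (3*b-2)*(3-2*b)^2*S := mul_nonneg (mul_nonneg hx.le (sq_nonneg _)) hS0
  have g10 : (0:ℝ) ≤ (3*b-2)*(3-2*b)^2*S*(1-S) :=
    mul_nonneg (mul_nonneg (mul_nonneg hx.le (sq_nonneg _)) hS0) hT
  have g11 : (0:ℝ) ≤ (3*b-2)*(3-2*b)^2*S*(1-S)^2 :=
    mul_nonneg (mul_nonneg (mul_nonneg hx.le (sq_nonneg _)) hS0) (sq_nonneg _)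
  have g12 : (0:ℝ) ≤ (3*b-2)^2*S := mul_nonneg (sq_nonneg _) hS0
  have g13 : (0:ℝ) ≤ (3*b-2)^2*S*(1-S) := mul_nonneg (mul_nonneg (sq_nonneg _) hS0) hT
  have g14 : (0:ℝ) < (3*b-2)^2*(3-2*b) := mul_pos (pow_pos hx 2) hy
  nlinarith [g1,g2,g3,g4,g5,g6,g7,g8,g9,g10,g11,g12,g13,g14]

lemma v_pos {β : ℝ} (hβ1 : 2/3 < β) (hβ2 : β < 3/2) {v : ℝ → ℝ} (hv : IsVBeta β v) (a : ℝ) :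
    0 < v a := by
  have hβ : (0:ℝ) < β := by linarith
  have hQpos : 0 < β + (1-β)*Real.sin a^2 := Qpos hβ a
  have hw : 0 < (β + (1-β)*Real.sin a^2) ^ (-(3:ℝ)/2) := Real.rpow_pos_of_pos hQpos _
  have hc2 : Real.cos a ^ 2 = 1 - Real.sin a ^ 2 := Real.cos_sq' a
  have key : 0 < Real.sin a^2*(3-4*Real.sin a^2)*(3*β+(2-6*β)*Real.sin a^2)
      - β^2*((1-Real.sin a^2)*(1-4*Real.sin a^2)*(3-(6-2*β)*(1-Real.sin a^2))) :=
    qpos hβ1 hβ2 (sq_nonneg _) (Real.sin_sq_le_one a)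
  have hX : Real.sin (3*a) * Ra β a - β^2 * (Real.cos (3*a) * Pa β a)
      = (Real.sin a^2*(3-4*Real.sin a^2)*(3*β+(2-6*β)*Real.sin a^2)
        - β^2*((1-Real.sin a^2)*(1-4*Real.sin a^2)*(3-(6-2*β)*(1-Real.sin a^2))))
        * ((β + (1-β)*Real.sin a^2) ^ (-(3:ℝ)/2)) := by
    simp only [Pa, Ra]
    rw [Real.sin_three_mul, Real.cos_three_mul]
    set w := (β + (1-β)*Real.sin a^2) ^ (-(3:ℝ)/2) with hwdef
    linear_combination ((-8*Real.cos a^4*β^3 + 8*Real.sin a^2*Real.cos a^2*β^3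
      - 8*Real.sin a^4*β^3 + 10*Real.sin a^2*β^3 + 24*Real.cos a^4*β^2
      - 24*Real.sin a^2*Real.cos a^2*β^2 + 24*Real.sin a^4*β^2 - 18*Real.sin a^2*β^2
      - 2*Real.cos a^2*β^3 - 6*Real.cos a^2*β^2 - 2*β^3 + 3*β^2) * w) * hc2
  have hpos : 0 < Real.sin (3*a) * Ra β a - β^2 * (Real.cos (3*a) * Pa β a) := by
    rw [hX]; exact mul_pos key hw
  have hrep := v_rep hβ hv a
  have hβ2' : (0:ℝ) < β^2 := by positivity
  rw [hrep]
  rw [div_sub_div _ _ (by positivity : (9:ℝ)*β^2 ≠ 0) (by norm_num : (9:ℝ) ≠ 0)]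
  apply div_pos
  · nlinarith [hpos]
  · positivity


lemma secdiff {g : R2 → ℝ} (hg : ContDiff ℝ 2 g) {C : ℝ}
    (hC : ∀ z, ‖iteratedFDeriv ℝ 2 g z‖ ≤ C) (x y : R2) :
    |g (x+y) + g (x-y) - 2*g x| ≤ 2*C*‖y‖^2 := by
  have hdg : Differentiable ℝ g := hg.differentiable (by norm_num)
  have hdg1 : Differentiable ℝ (fderiv ℝ g) :=
    (hg.fderiv_right (m := 1) (by norm_num)).differentiable (by norm_num)
  have hC2 : ∀ z, ‖fderiv ℝ (fderiv ℝ g) z‖ ≤ C := by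
    intro z
    have h1 : iteratedFDeriv ℝ 1 (fderiv ℝ g) z
        = (continuousMultilinearCurryFin1 ℝ R2 (R2 →L[ℝ] ℝ)).symm (fderiv ℝ (fderiv ℝ g) z) := by
      ext m
      simp [iteratedFDeriv_one_apply]
    calc ‖fderiv ℝ (fderiv ℝ g) z‖
        = ‖iteratedFDeriv ℝ 1 (fderiv ℝ g) z‖ := by rw [h1, LinearIsometryEquiv.norm_map]
      _ = ‖iteratedFDeriv ℝ 2 g z‖ := norm_iteratedFDeriv_fderiv
      _ ≤ C := hC z
  have hlip : ∀ u w : R2, ‖fderiv ℝ g u - fderiv ℝ g w‖ ≤ C * ‖u - w‖ := fun u w =>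
    Convex.norm_image_sub_le_of_norm_fderiv_le (fun z _ => hdg1 z) (fun z _ => hC2 z)
      convex_univ (mem_univ w) (mem_univ u)
  set φ : ℝ → ℝ := fun t => g (x + t • y) + g (x - t • y) with hφ
  set φ' : ℝ → ℝ := fun t => (fderiv ℝ g (x + t • y)) y - (fderiv ℝ g (x - t • y)) y with hφ'
  have hder : ∀ t : ℝ, HasDerivAt φ (φ' t) t := by
    intro t
    have hin1 : HasDerivAt (fun t : ℝ => x + t • y) y t := by
      simpa using ((hasDerivAt_id t).smul_const y).const_add x
    have hin2 : HasDerivAt (fun t : ℝ => x - t • y) (-y) t := by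
      simpa [sub_eq_add_neg] using (((hasDerivAt_id t).smul_const y).neg).const_add x
    have h1 := (hdg (x + t • y)).hasFDerivAt.comp_hasDerivAt t hin1
    have h2 := (hdg (x - t • y)).hasFDerivAt.comp_hasDerivAt t hin2
    exact (h1.add h2).congr_deriv (by simp [hφ', map_neg, sub_eq_add_neg])
  have hbound : ∀ t ∈ Icc (0:ℝ) 1, ‖φ' t‖ ≤ 2*C*‖y‖^2 := by
    intro t ht
    have h1 : φ' t = (fderiv ℝ g (x + t • y) - fderiv ℝ g (x - t • y)) y := by
      simp [hφ', ContinuousLinearMap.sub_apply]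
    rw [h1]
    calc ‖(fderiv ℝ g (x + t • y) - fderiv ℝ g (x - t • y)) y‖
        ≤ ‖fderiv ℝ g (x + t • y) - fderiv ℝ g (x - t • y)‖ * ‖y‖ :=
          ContinuousLinearMap.le_opNorm _ _
      _ ≤ (C * ‖(x + t • y) - (x - t • y)‖) * ‖y‖ := by
          have := hlip (x + t • y) (x - t • y)
          have hyn : (0:ℝ) ≤ ‖y‖ := norm_nonneg y
          exact mul_le_mul_of_nonneg_right this hyn
      _ = C * (2*t) * ‖y‖^2 := by
          rw [show (x + t • y) - (x - t • y) = (2*t) • y by module, norm_smul]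
          rw [Real.norm_eq_abs, abs_of_nonneg (by linarith [ht.1])]
          ring
      _ ≤ 2*C*‖y‖^2 := by
          have hyC : (0:ℝ) ≤ C := le_trans (norm_nonneg _) (hC x)
          nlinarith [mul_nonneg (mul_nonneg hyC (sq_nonneg ‖y‖)) (sub_nonneg.2 ht.2)]
  have hmean := norm_image_sub_le_of_norm_deriv_le_segment'
    (fun t ht => (hder t).hasDerivWithinAt)
    (fun t ht => hbound t (Ico_subset_Icc_self ht)) 1 (right_mem_Icc.2 zero_le_one)
  have h10 : φ 1 = g (x+y) + g (x-y) := by simp [hφ]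
  have h00 : φ 0 = g x + g x := by simp [hφ]
  rw [h10, h00] at hmean
  rw [show |g (x+y) + g (x-y) - 2*g x| = ‖(g (x+y) + g (x-y)) - (g x + g x)‖ by
    rw [Real.norm_eq_abs]; ring_nf]
  simpa using hmean

lemma kbar_meas {v : ℝ → ℝ} (hvc : Continuous v) : Measurable (Kbar v) := by
  have h1 : Continuous fun x : R2 => ((x 0 : ℂ) + (x 1 : ℂ) * Complex.I) :=
    ((Complex.continuous_ofReal.comp ((continuous_apply 0).comp (PiLp.continuous_ofLp ..))).add
      ((Complex.continuous_ofReal.comp ((continuous_apply 1).comp (PiLp.continuous_ofLp ..))).mul continuous_const))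
  exact ((measurable_const.mul
    (hvc.measurable.comp (Complex.measurable_arg.comp h1.measurable))).div
    ((continuous_norm.pow 3).measurable))

lemma int_ball : IntegrableOn (fun y : R2 => ‖y‖⁻¹) (Metric.ball 0 1) volume := by
  constructor
  · exact (measurable_norm.inv).aestronglyMeasurable
  · rw [hasFiniteIntegral_iff_norm]
    have hle : (∫⁻ y in Metric.ball (0:R2) 1, ENNReal.ofReal ‖(‖y‖⁻¹)‖)
        = ∫⁻ y in Metric.ball (0:R2) 1, ENNReal.ofReal (‖y‖⁻¹) := by
      congr 1 with y
      rw [Real.norm_eq_abs, abs_of_nonneg (by positivity)]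
    rw [hle, lintegral_eq_lintegral_meas_le (volume.restrict (Metric.ball (0:R2) 1)) (f := fun y : R2 => ‖y‖⁻¹)
      (Eventually.of_forall (fun y => by show (0:ℝ) ≤ ‖y‖⁻¹; positivity))
      (measurable_norm.inv).aemeasurable]
    have hsplit : (∫⁻ t in Ioi (0:ℝ), (volume.restrict (Metric.ball (0:R2) 1)) {a | t ≤ ‖a‖⁻¹})
        ≤ (∫⁻ t in Ioc (0:ℝ) 1, (volume.restrict (Metric.ball (0:R2) 1)) {a | t ≤ ‖a‖⁻¹})
          + ∫⁻ t in Ioi (1:ℝ), (volume.restrict (Metric.ball (0:R2) 1)) {a | t ≤ ‖a‖⁻¹} := by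
      calc (∫⁻ t in Ioi (0:ℝ), (volume.restrict (Metric.ball (0:R2) 1)) {a | t ≤ ‖a‖⁻¹})
          ≤ ∫⁻ t in Ioc (0:ℝ) 1 ∪ Ioi 1, (volume.restrict (Metric.ball (0:R2) 1)) {a | t ≤ ‖a‖⁻¹} :=
            lintegral_mono_set Ioi_subset_Ioc_union_Ioi
        _ ≤ _ := lintegral_union_le _ _ _
    refine lt_of_le_of_lt hsplit (ENNReal.add_lt_top.2 ⟨?_, ?_⟩)
    · calc (∫⁻ t in Ioc (0:ℝ) 1, (volume.restrict (Metric.ball (0:R2) 1)) {a | t ≤ ‖a‖⁻¹})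
          ≤ ∫⁻ _ in Ioc (0:ℝ) 1, volume (Metric.ball (0:R2) 1) := by
            refine setLIntegral_mono' measurableSet_Ioc (fun t _ => ?_)
            refine le_trans (measure_mono (subset_univ _)) ?_
            rw [Measure.restrict_apply_univ]
        _ = volume (Metric.ball (0:R2) 1) * volume (Ioc (0:ℝ) 1) := by
            rw [setLIntegral_const]
        _ < ⊤ := ENNReal.mul_lt_top measure_ball_lt_top (by simp)
    · have hbnd : ∀ t ∈ Ioi (1:ℝ), (volume.restrict (Metric.ball (0:R2) 1)) {a | t ≤ ‖a‖⁻¹}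
          ≤ ENNReal.ofReal ((t⁻¹)^2) * volume (Metric.ball (0:R2) 1) := by
        intro t ht
        have ht1 : (1:ℝ) < t := ht
        have hsub : {a : R2 | t ≤ ‖a‖⁻¹} ⊆ Metric.closedBall 0 t⁻¹ := by
          intro a ha
          simp only [mem_setOf_eq] at ha
          rcases eq_or_ne a 0 with rfl | hne
          · simp at ha; linarith
          · have hpos : 0 < ‖a‖ := norm_pos_iff.2 hne
            have : ‖a‖ ≤ t⁻¹ := by
              rw [show ‖a‖ = (‖a‖⁻¹)⁻¹ by rw [inv_inv]]
              exact inv_anti₀ (by linarith) ha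
            simpa [Metric.mem_closedBall, dist_zero_right]
        calc (volume.restrict (Metric.ball (0:R2) 1)) {a | t ≤ ‖a‖⁻¹}
            ≤ (volume.restrict (Metric.ball (0:R2) 1)) (Metric.closedBall 0 t⁻¹) :=
              measure_mono hsub
          _ ≤ volume (Metric.closedBall (0:R2) t⁻¹) := Measure.restrict_le_self _
          _ = ENNReal.ofReal ((t⁻¹)^2) * volume (Metric.ball (0:R2) 1) := by
              rw [Measure.addHaar_closedBall _ _ (by positivity),
                finrank_euclideanSpace_fin]
      calc (∫⁻ t in Ioi (1:ℝ), (volume.restrict (Metric.ball (0:R2) 1)) {a | t ≤ ‖a‖⁻¹})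
          ≤ ∫⁻ t in Ioi (1:ℝ), ENNReal.ofReal ((t⁻¹)^2) * volume (Metric.ball (0:R2) 1) :=
            setLIntegral_mono' measurableSet_Ioi hbnd
        _ = (∫⁻ t in Ioi (1:ℝ), ENNReal.ofReal ((t⁻¹)^2)) * volume (Metric.ball (0:R2) 1) := by
            rw [lintegral_mul_const' _ _ measure_ball_lt_top.ne]
        _ < ⊤ := by
            refine ENNReal.mul_lt_top ?_ measure_ball_lt_top
            refine IntegrableOn.setLIntegral_lt_top ?_
            have h0 : IntegrableOn (fun t : ℝ => t ^ (-2:ℝ)) (Ioi 1) volume :=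
              integrableOn_Ioi_rpow_of_lt (by norm_num) one_pos
            refine h0.congr_fun (fun t ht => ?_) measurableSet_Ioi
            have ht0 : (0:ℝ) < t := lt_trans one_pos ht
            beta_reduce
            rw [show (-2:ℝ) = -(2:ℕ) by norm_num, Real.rpow_neg ht0.le, Real.rpow_natCast]
            rw [inv_pow]

lemma integrable_dK {v : ℝ → ℝ} (hvc : Continuous v) {Mv : ℝ} (hMv : ∀ θ, |v θ| ≤ Mv)
    {d : R2 → ℝ} (hd : Continuous d) {C1 C2 : ℝ} (hd1 : ∀ y, |d y| ≤ C1)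
    (hd2 : ∀ y, |d y| ≤ C2*‖y‖^2) :
    Integrable (fun y : R2 => d y * Kbar v y) := by
  have hMv0 : 0 ≤ Mv := le_trans (abs_nonneg _) (hMv 0)
  have hC10 : 0 ≤ C1 := le_trans (abs_nonneg _) (hd1 0)
  have hC20 : 0 ≤ C2 := by
    have h := hd2 (EuclideanSpace.single 0 (1:ℝ))
    have hn : ‖EuclideanSpace.single (0 : Fin 2) (1:ℝ)‖ = 1 := by
      simp [EuclideanSpace.norm_single]
    rw [hn] at h
    nlinarith [abs_nonneg (d (EuclideanSpace.single 0 (1:ℝ)))]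
  have hmeas : AEStronglyMeasurable (fun y : R2 => d y * Kbar v y) volume :=
    (hd.measurable.mul (kbar_meas hvc)).aestronglyMeasurable
  have hKb : ∀ y : R2, |Kbar v y| ≤ 9*Mv/‖y‖^3 := by
    intro y
    rcases eq_or_ne y 0 with rfl | hy
    · simp [Kbar]
    · have h3 : (0:ℝ) < ‖y‖^3 := pow_pos (norm_pos_iff.2 hy) 3
      rw [Kbar, abs_div, abs_of_pos h3]
      refine (div_le_div_iff_of_pos_right h3).2 ?_
      rw [abs_mul, abs_of_nonneg (by norm_num : (0:ℝ) ≤ 9)]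
      exact mul_le_mul_of_nonneg_left (hMv _) (by norm_num)
  rw [← integrableOn_univ, ← Set.union_compl_self (Metric.ball (0:R2) 1)]
  refine IntegrableOn.union ?_ ?_
  · refine Integrable.mono' (int_ball.const_mul (9*Mv*C2)) hmeas.restrict ?_
    refine ae_of_all _ ?_
    intro y
    rcases eq_or_ne y 0 with rfl | hy
    · simp [Kbar]
    · have hy0 : (0:ℝ) < ‖y‖ := norm_pos_iff.2 hy
      calc ‖d y * Kbar v y‖ = |d y| * |Kbar v y| := by rw [Real.norm_eq_abs, abs_mul]
        _ ≤ (C2*‖y‖^2) * (9*Mv/‖y‖^3) :=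
            mul_le_mul (hd2 y) (hKb y) (abs_nonneg _) (mul_nonneg hC20 (by positivity))
        _ = 9*Mv*C2 * ‖y‖⁻¹ := by field_simp
  · have h18 : Integrable (fun y : R2 => (1+‖y‖)^(-(3:ℝ))) volume :=
      integrable_one_add_norm (by rw [finrank_euclideanSpace_fin]; norm_num)
    refine Integrable.mono' ((h18.const_mul (72*Mv*C1)).integrableOn) hmeas.restrict ?_
    refine (ae_restrict_iff' measurableSet_ball.compl).2 (ae_of_all _ ?_)
    intro y hy
    have hy1 : 1 ≤ ‖y‖ := by
      have := hy
      simp only [mem_compl_iff, Metric.mem_ball, dist_zero_right, not_lt] at this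
      exact this
    have hy0 : (0:ℝ) < ‖y‖ := lt_of_lt_of_le one_pos hy1
    have hrw : (1+‖y‖)^(-(3:ℝ)) = ((1+‖y‖)^(3:ℕ))⁻¹ := by
      rw [show (-(3:ℝ)) = -((3:ℕ):ℝ) by norm_num, Real.rpow_neg (by positivity),
        Real.rpow_natCast]
    have h1 : (1+‖y‖)^(3:ℕ) ≤ 8*‖y‖^3 := by
      nlinarith [mul_nonneg (sub_nonneg.2 hy1) (by positivity : (0:ℝ) ≤ 7*‖y‖^2+4*‖y‖+1)]
    calc ‖d y * Kbar v y‖ = |d y| * |Kbar v y| := by rw [Real.norm_eq_abs, abs_mul]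
      _ ≤ C1 * (9*Mv/‖y‖^3) := mul_le_mul (hd1 y) (hKb y) (abs_nonneg _) hC10
      _ ≤ 72*Mv*C1 * ((1+‖y‖)^(3:ℕ))⁻¹ := by
          rw [show C1 * (9*Mv/‖y‖^3) = (9*Mv*C1)/‖y‖^3 by ring,
            show (72:ℝ)*Mv*C1 * ((1+‖y‖)^(3:ℕ))⁻¹ = (72*Mv*C1)/(1+‖y‖)^(3:ℕ) by ring]
          rw [div_le_div_iff₀ (by positivity) (by positivity)]
          nlinarith [h1, mul_nonneg hMv0 hC10, pow_pos hy0 3]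
      _ = 72*Mv*C1 * (1+‖y‖)^(-(3:ℝ)) := by rw [hrw]

lemma lop_min {v : ℝ → ℝ} (hvc : Continuous v) (hvper : Function.Periodic v π)
    (hvpos : ∀ θ, 0 < v θ)
    {g : R2 → ℝ} (hg : ContDiff ℝ 2 g) (hgb : ∃ C, ∀ x, |g x| ≤ C)
    (hg2b : ∃ C, ∀ x, ‖iteratedFDeriv ℝ 2 g x‖ ≤ C)
    (hgnc : ¬ ∃ c : ℝ, ∀ x, g x = c) (wm : R2) (hmin : ∀ x, g wm ≤ g x) :
    Lop v g wm < 0 := by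
  obtain ⟨Cg, hCg⟩ := hgb
  obtain ⟨C, hC⟩ := hg2b
  have hne : (Icc (0:ℝ) π).Nonempty := ⟨0, left_mem_Icc.2 pi_pos.le⟩
  obtain ⟨θM, hθM, hθmax⟩ := isCompact_Icc.exists_isMaxOn hne hvc.continuousOn
  set Mv := v θM with hMvdef
  have hvle : ∀ θ, |v θ| ≤ Mv := by
    intro θ
    obtain ⟨y, hy, hval⟩ := hvper.exists_mem_Ico₀ pi_pos θ
    rw [abs_of_pos (hvpos θ), hval]
    exact hθmax (Ico_subset_Icc_self hy)
  obtain ⟨θm, hθm', hθmin⟩ := isCompact_Icc.exists_isMinOn hne hvc.continuousOn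
  set m := v θm with hmdef
  have hm : 0 < m := hvpos θm
  have hvge : ∀ θ, m ≤ v θ := by
    intro θ
    obtain ⟨y, hy, hval⟩ := hvper.exists_mem_Ico₀ pi_pos θ
    rw [hval]
    exact hθmin (Ico_subset_Icc_self hy)
  set d : R2 → ℝ := fun y => g (wm + y) + g (wm - y) - 2 * g wm with hd
  have hdc : Continuous d := by
    have hgc := hg.continuous
    exact ((hgc.comp (continuous_const.add continuous_id)).add
      (hgc.comp (continuous_const.sub continuous_id))).sub continuous_const
  have hd1 : ∀ y, |d y| ≤ 4*Cg := by
    intro y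
    have h1 := abs_le.1 (hCg (wm+y))
    have h2 := abs_le.1 (hCg (wm-y))
    have h3 := abs_le.1 (hCg wm)
    have hdy : d y = g (wm + y) + g (wm - y) - 2 * g wm := rfl
    rw [hdy]
    refine abs_le.2 ⟨by linarith [h1.1, h2.1, h3.2], by linarith [h1.2, h2.2, h3.1]⟩
  have hd2 : ∀ y, |d y| ≤ (2*C)*‖y‖^2 := fun y => secdiff hg hC wm y
  have hInt : Integrable (fun y => d y * Kbar v y) := integrable_dK hvc hvle hdc hd1 hd2
  have hK0 : ∀ y, 0 ≤ Kbar v y := fun y =>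
    div_nonneg (mul_nonneg (by norm_num) (hvpos _).le) (by positivity)
  have hd0 : ∀ y, 0 ≤ d y := by
    intro y
    have h1 := hmin (wm+y)
    have h2 := hmin (wm-y)
    have hdy : d y = g (wm + y) + g (wm - y) - 2 * g wm := rfl
    rw [hdy]
    linarith
  have hF0 : ∀ y, 0 ≤ d y * Kbar v y := fun y => mul_nonneg (hd0 y) (hK0 y)
  push_neg at hgnc
  obtain ⟨x0, hx0⟩ := hgnc (g wm)
  have hlt : g wm < g x0 := lt_of_le_of_ne (hmin x0) (Ne.symm hx0)
  set y0 : R2 := x0 - wm with hy0def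
  have hwm : wm + y0 = x0 := by rw [hy0def]; abel
  have hy0ne : y0 ≠ 0 := by
    intro h
    rw [hy0def, sub_eq_zero] at h
    rw [h] at hlt
    exact lt_irrefl _ hlt
  have hy0n : 0 < ‖y0‖ := norm_pos_iff.2 hy0ne
  set δ := g x0 - g wm with hδdef
  have hδ0 : 0 < δ := sub_pos.2 hlt
  have hUopen : IsOpen ((fun y : R2 => g (wm + y)) ⁻¹' (Ioi (g wm + δ/2))) :=
    (hg.continuous.comp (continuous_const.add continuous_id)).isOpen_preimage _ isOpen_Ioi
  have hy0U : y0 ∈ ((fun y : R2 => g (wm + y)) ⁻¹' (Ioi (g wm + δ/2))) := by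
    simp only [mem_preimage, hwm, mem_Ioi]
    linarith
  obtain ⟨r, hr0, hball⟩ := Metric.isOpen_iff.1 hUopen y0 hy0U
  set r' := min r (‖y0‖/2) with hr'def
  have hr'0 : 0 < r' := lt_min hr0 (by positivity)
  have hgeo : ∀ y ∈ Metric.ball y0 r', 0 < ‖y‖ ∧ ‖y‖ ≤ 2*‖y0‖ := by
    intro y hy
    have hdist : ‖y - y0‖ < r' := by rwa [Metric.mem_ball, dist_eq_norm] at hy
    have hrhalf : r' ≤ ‖y0‖/2 := min_le_right _ _
    have h1 : ‖y0‖ - ‖y‖ ≤ ‖y0 - y‖ := norm_sub_norm_le y0 y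
    have h2 : ‖y‖ - ‖y0‖ ≤ ‖y - y0‖ := norm_sub_norm_le y y0
    rw [norm_sub_rev y0 y] at h1
    constructor
    · linarith
    · linarith
  set k0 := 9*m/(2*‖y0‖)^3 with hk0def
  have h2y0 : (0:ℝ) < (2*‖y0‖)^3 := pow_pos (by linarith) 3
  have hk00 : 0 < k0 := div_pos (by linarith) h2y0
  have hlow : ∀ y ∈ Metric.ball y0 r', (δ/2) * k0 ≤ d y * Kbar v y := by
    intro y hy
    obtain ⟨hyp, hyle⟩ := hgeo y hy
    have hdy : δ/2 ≤ d y := by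
      have hyU := hball (Metric.ball_subset_ball (min_le_left _ _) hy)
      simp only [mem_preimage, mem_Ioi] at hyU
      have h2 := hmin (wm-y)
      have hdyr : d y = g (wm + y) + g (wm - y) - 2 * g wm := rfl
      rw [hdyr]
      linarith
    have hKy : k0 ≤ Kbar v y := by
      have h9 : (9:ℝ)*m ≤ 9 * v (Complex.arg ((y 0 : ℂ) + (y 1 : ℂ) * Complex.I)) := by
        nlinarith [hvge (Complex.arg ((y 0 : ℂ) + (y 1 : ℂ) * Complex.I))]
      have hden : ‖y‖^3 ≤ (2*‖y0‖)^3 := pow_le_pow_left₀ (norm_nonneg y) hyle 3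
      rw [hk0def, Kbar]
      exact div_le_div₀ (mul_nonneg (by norm_num) (hvpos _).le) h9 (pow_pos hyp 3) hden
    exact mul_le_mul hdy hKy hk00.le (hd0 y)
  have hbpos : 0 < (volume (Metric.ball y0 r')).toReal :=
    ENNReal.toReal_pos (Metric.measure_ball_pos _ _ hr'0).ne' measure_ball_lt_top.ne
  have hI : 0 < ∫ y : R2, d y * Kbar v y := by
    calc (0:ℝ) < (δ/2 * k0) * (volume (Metric.ball y0 r')).toReal :=
          mul_pos (mul_pos (by linarith) hk00) hbpos
      _ ≤ ∫ y in Metric.ball y0 r', d y * Kbar v y :=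
          by
            have h := setIntegral_ge_of_const_le measurableSet_ball measure_ball_lt_top.ne hlow
              hInt.integrableOn
            rw [smul_eq_mul, mul_comm] at h
            exact h
      _ ≤ ∫ y : R2, d y * Kbar v y := setIntegral_le_integral hInt (ae_of_all _ hF0)
  have hLop : Lop v g wm = -(1/(4*π)) * ∫ y : R2, d y * Kbar v y := rfl
  rw [hLop]
  exact mul_neg_of_neg_of_pos (neg_lt_zero.2 (by positivity)) hI

theorem stmt11' {v : ℝ → ℝ} (hvc : Continuous v) (hvper : Function.Periodic v π)
    (hvpos : ∀ θ, 0 < v θ)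
    (g : R2 → ℝ) (hg : ContDiff ℝ 2 g)
    (hgb : ∃ C, ∀ x, |g x| ≤ C)
    (hg2b : ∃ C, ∀ x, ‖iteratedFDeriv ℝ 2 g x‖ ≤ C)
    (hgnc : ¬ ∃ c : ℝ, ∀ x, g x = c) :
    (∀ wm : R2, (∀ x, g wm ≤ g x) → Lop v g wm < 0) ∧
    (∀ wM : R2, (∀ x, g x ≤ g wM) → 0 < Lop v g wM) := by
  constructor
  · intro wm hmin
    exact lop_min hvc hvper hvpos hg hgb hg2b hgnc wm hmin
  · intro wM hmax
    have hgneg : ContDiff ℝ 2 (-g) := hg.neg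
    have hgbneg : ∃ C, ∀ x, |(-g) x| ≤ C := by
      obtain ⟨Cg, hCg⟩ := hgb
      exact ⟨Cg, fun x => by simpa [abs_neg] using hCg x⟩
    have hg2bneg : ∃ C, ∀ x, ‖iteratedFDeriv ℝ 2 (-g) x‖ ≤ C := by
      obtain ⟨C, hC⟩ := hg2b
      refine ⟨C, fun x => ?_⟩
      rw [iteratedFDeriv_neg_apply, norm_neg]
      exact hC x
    have hgncneg : ¬ ∃ c : ℝ, ∀ x, (-g) x = c := by
      rintro ⟨c, hc⟩
      exact hgnc ⟨-c, fun x => by have := hc x; simp only [Pi.neg_apply] at this; linarith⟩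
    have hminneg : ∀ x, (-g) wM ≤ (-g) x := by
      intro x
      simp only [Pi.neg_apply]
      exact neg_le_neg (hmax x)
    have hres := lop_min hvc hvper hvpos hgneg hgbneg hg2bneg hgncneg wM hminneg
    have hrel : Lop v (-g) wM = - Lop v g wM := by
      have hfun : (fun y : R2 => ((-g) (wM + y) + (-g) (wM - y) - 2 * (-g) wM) * Kbar v y)
          = fun y : R2 => -((g (wM + y) + g (wM - y) - 2 * g wM) * Kbar v y) := by
        funext y
        simp only [Pi.neg_apply]
        ring
      show -(1/(4*π)) * ∫ y : R2, ((-g) (wM + y) + (-g) (wM - y) - 2 * (-g) wM) * Kbar v y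
          = -(-(1/(4*π)) * ∫ y : R2, (g (wM + y) + g (wM - y) - 2 * g wM) * Kbar v y)
      rw [hfun, integral_neg]
      ring
    rw [hrel] at hres
    linarith


end Stmt11

/-- strict sign of `L̄ g` at global minima and maxima of a bounded,
non-constant C² function `g` with bounded second derivatives. -/


theorem stmt11 (β : ℝ) (hβ1 : 2/3 < β) (hβ2 : β < 3/2) (v : ℝ → ℝ) (hv : IsVBeta β v)
    (g : R2 → ℝ) (hg : ContDiff ℝ 2 g)
    (hgb : ∃ C, ∀ x, |g x| ≤ C)
    (hg2b : ∃ C, ∀ x, ‖iteratedFDeriv ℝ 2 g x‖ ≤ C)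
    (hgnc : ¬ ∃ c : ℝ, ∀ x, g x = c) :
    (∀ wm : R2, (∀ x, g wm ≤ g x) → Lop v g wm < 0) ∧
    (∀ wM : R2, (∀ x, g x ≤ g wM) → 0 < Lop v g wM) := by
  have hβ : (0:ℝ) < β := by linarith
  exact Stmt11.stmt11' hv.1.continuous hv.2.1 (fun θ => Stmt11.v_pos hβ1 hβ2 hv θ)
    g hg hgb hg2b hgnc
end
end
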